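/- For ASVD1 with Λ = {n : σₙ > ε, |⟨y,vₙ⟩|/σₙ ≤ c‖y‖}, if m ∈ I_N∖Λ with σₘ > ε, then for every z ∈ ℂᴺ with ‖z‖ < c‖y‖ one has √σₘ ≤ ‖f − T_N z‖/(c‖y‖ − ‖z‖). -/

import Mathlib

open scoped ComplexInnerProductSpace

theorem stmt_11 {H : Type*} [NormedAddCommGroup H] [InnerProductSpace ℂ H]
    {N : ℕ} (φ : Fin N → H) (σ : Fin N → ℝ)
    (v : Fin N → EuclideanSpace ℂ (Fin N)) (hv : Orthonormal ℂ v)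
    (G : Matrix (Fin N) (Fin N) ℂ) (hG : ∀ m k, G m k = ⟪φ m, φ k⟫)
    (heig : ∀ n i, G.mulVec (fun j => v n j) i = (σ n : ℂ) * v n i)
    (T : EuclideanSpace ℂ (Fin N) → H) (hT : ∀ z, T z = ∑ n, z n • φ n)
    (ξ : Fin N → H) (hξ : ∀ n, ξ n = T (v n))
    (hσ : ∀ n, 0 ≤ σ n) (ε c : ℝ) (hε : 0 < ε) (hc : 0 < c)
    (f : H) (y : EuclideanSpace ℂ (Fin N)) (hy : ∀ n, y n = ⟪φ n, f⟫)
    (m : Fin N) (hmσ : ε < σ m)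
    (hm : m ∉ Finset.univ.filter
      (fun n => ε < σ n ∧ ‖⟪v n, y⟫‖ / σ n ≤ c * ‖y‖))
    (z : EuclideanSpace ℂ (Fin N)) (hz : ‖z‖ < c * ‖y‖) :
    Real.sqrt (σ m) ≤ ‖f - T z‖ / (c * ‖y‖ - ‖z‖) := by
  have hs : (0:ℝ) < σ m := hε.trans hmσ
  -- the key inner product identity
  have hTT : ∀ w : EuclideanSpace ℂ (Fin N), ⟪T (v m), T w⟫ = (σ m : ℂ) * ⟪v m, w⟫ := by
    intro w
    have hGh : ∀ n k, (starRingEnd ℂ) (G n k) = G k n := by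
      intro n k; rw [hG, hG, inner_conj_symm]
    rw [hT, hT]
    simp only [sum_inner, inner_sum, inner_smul_left, inner_smul_right, ← hG,
      PiLp.inner_apply, RCLike.inner_apply]
    rw [Finset.mul_sum]
    refine Finset.sum_congr rfl fun k _ => ?_
    have h1 : ∑ n, (starRingEnd ℂ) (v m n) * G n k
        = (starRingEnd ℂ) (Matrix.mulVec G (fun j => v m j) k) := by
      rw [Matrix.mulVec, dotProduct, map_sum]
      refine Finset.sum_congr rfl fun n _ => ?_
      rw [map_mul, hGh]
      ring
    rw [h1, heig, map_mul, Complex.conj_ofReal]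
    ring
  have hvv : ⟪v m, v m⟫ = (1:ℂ) := by
    have := hv.1 m
    rw [@inner_self_eq_norm_sq_to_K ℂ, this]; norm_num
  have hnξ : ‖ξ m‖ = Real.sqrt (σ m) := by
    have h2 : ⟪ξ m, ξ m⟫ = (σ m : ℂ) := by
      rw [hξ, hTT, hvv, mul_one]
    rw [@norm_eq_sqrt_re_inner ℂ, h2]
    simp
  have hξf : ⟪ξ m, f⟫ = ⟪v m, y⟫ := by
    rw [hξ, hT]
    simp only [sum_inner, inner_smul_left, PiLp.inner_apply, RCLike.inner_apply]
    exact Finset.sum_congr rfl fun n _ => by rw [hy, mul_comm]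
  have hξz : ⟪ξ m, T z⟫ = (σ m : ℂ) * ⟪v m, z⟫ := by rw [hξ, hTT]
  -- lower bound from hm
  have hlow : c * ‖y‖ < ‖⟪v m, y⟫‖ / σ m := by
    simp only [Finset.mem_filter, Finset.mem_univ, true_and, not_and, not_le] at hm
    exact hm hmσ
  have hlow' : σ m * (c * ‖y‖) < ‖⟪v m, y⟫‖ := by
    rw [lt_div_iff₀ hs] at hlow; linarith [hlow]
  have hd : (0:ℝ) < c * ‖y‖ - ‖z‖ := by linarith
  -- main estimate
  have hcs : ‖⟪ξ m, f - T z⟫‖ ≤ Real.sqrt (σ m) * ‖f - T z‖ := by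
    rw [← hnξ]; exact norm_inner_le_norm _ _
  have hvz : ‖⟪v m, z⟫‖ ≤ ‖z‖ := by
    calc ‖⟪v m, z⟫‖ ≤ ‖v m‖ * ‖z‖ := norm_inner_le_norm _ _
    _ = ‖z‖ := by rw [hv.1 m, one_mul]
  have hsplit : ⟪ξ m, f - T z⟫ = ⟪v m, y⟫ - (σ m : ℂ) * ⟪v m, z⟫ := by
    rw [inner_sub_right, hξf, hξz]
  have hlb : σ m * (c * ‖y‖ - ‖z‖) ≤ ‖⟪ξ m, f - T z⟫‖ := by
    rw [hsplit]
    have := norm_sub_norm_le (⟪v m, y⟫) ((σ m : ℂ) * ⟪v m, z⟫)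
    have hn : ‖(σ m : ℂ) * ⟪v m, z⟫‖ ≤ σ m * ‖z‖ := by
      rw [norm_mul, Complex.norm_real, Real.norm_of_nonneg hs.le]
      exact mul_le_mul_of_nonneg_left hvz hs.le
    nlinarith
  have key : σ m * (c * ‖y‖ - ‖z‖) ≤ Real.sqrt (σ m) * ‖f - T z‖ := hlb.trans hcs
  rw [le_div_iff₀ hd]
  have hsq : Real.sqrt (σ m) * Real.sqrt (σ m) = σ m := Real.mul_self_sqrt hs.le
  have hsp : (0:ℝ) < Real.sqrt (σ m) := Real.sqrt_pos.mpr hs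
  have key' : Real.sqrt (σ m) * (Real.sqrt (σ m) * (c * ‖y‖ - ‖z‖))
      ≤ Real.sqrt (σ m) * ‖f - T z‖ := by nlinarith [key, hsq]
  exact le_of_mul_le_mul_left key' hsp
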